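/- Let G be a finite connected k-regular graph with expanding constant h(G) ≥ h > 0, and let g : G → [0,∞) be a function with |supp(g)| ≤ |G|/2. Then h · ∑_{s ∈ G} g(s) ≤ ∑_{{s,t} ∈ E} |g(s) − g(t)|, where E is the set of (unoriented) edges of G. -/
import Mathlib


open Finset

lemma coarea_aux {V : Type} [Fintype V] [DecidableEq V]
    (G : SimpleGraph V) [DecidableRel G.Adj] (h : ℝ) (hh : 0 < h)
    (hexp : ∀ A : Finset V, 2 * A.card ≤ Fintype.card V →
      h * A.card ≤ ∑ s ∈ A, ∑ t ∈ Aᶜ, (if G.Adj s t then (1 : ℝ) else 0)) :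
    ∀ N : ℕ, ∀ g : V → ℝ,
      ((univ.filter fun s => g s ≠ 0).image g).card ≤ N →
      (∀ s, 0 ≤ g s) →
      2 * (univ.filter fun s => g s ≠ 0).card ≤ Fintype.card V →
      h * ∑ s, g s ≤ (1 / 2) * ∑ s, ∑ t, (if G.Adj s t then |g s - g t| else 0) := by
  intro N
  induction N with
  | zero =>
    intro g hcard hg hsupp
    have hzero : ∀ s, g s = 0 := by
      intro s
      by_contra hs
      have hmem : g s ∈ (univ.filter fun s => g s ≠ 0).image g :=
        Finset.mem_image_of_mem g (by simp [hs])
      have := Finset.card_pos.2 ⟨_, hmem⟩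
      omega
    simp [hzero]
  | succ N ih =>
    intro g hcard hg hsupp
    set A : Finset V := univ.filter fun s => g s ≠ 0 with hA
    by_cases hAe : A = ∅
    · have hzero : ∀ s, g s = 0 := by
        intro s
        by_contra hs
        have : s ∈ A := by simp [hA, hs]
        simp [hAe] at this
      simp [hzero]
    · have hAne : A.Nonempty := Finset.nonempty_iff_ne_empty.2 hAe
      set m : ℝ := A.inf' hAne g with hm
      obtain ⟨s₀, hs₀A, hs₀⟩ := Finset.exists_mem_eq_inf' hAne g
      have hmemA : ∀ s, s ∈ A ↔ g s ≠ 0 := by intro s; simp [hA]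
      have hmpos : 0 < m := by
        have h1 : g s₀ ≠ 0 := (hmemA s₀).1 hs₀A
        rw [hm, hs₀]
        exact lt_of_le_of_ne (hg s₀) (Ne.symm h1)
      have hmle : ∀ s ∈ A, m ≤ g s := fun s hs => Finset.inf'_le g hs
      set g' : V → ℝ := fun s => if g s = 0 then 0 else g s - m with hg'def
      have hg'nonneg : ∀ s, 0 ≤ g' s := by
        intro s
        simp only [hg'def]
        split
        · exact le_refl 0
        · next hs => linarith [hmle s ((hmemA s).2 hs)]
      -- support of g' is contained in A
      have hsubsupp : (univ.filter fun s => g' s ≠ 0) ⊆ A := by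
        intro s hs
        simp only [mem_filter, mem_univ, true_and, hg'def] at hs
        rw [hmemA]
        intro h0
        simp [h0] at hs
      -- value count of g' drops
      have hcard' : ((univ.filter fun s => g' s ≠ 0).image g').card ≤ N := by
        have hsub : (univ.filter fun s => g' s ≠ 0).image g' ⊆
            ((A.image g).erase m).image (fun x => x - m) := by
          intro v hv
          obtain ⟨s, hs, rfl⟩ := Finset.mem_image.1 hv
          simp only [mem_filter, mem_univ, true_and, hg'def] at hs
          have hgs : g s ≠ 0 := by intro h0; simp [h0] at hs
          have hgsm : g s - m ≠ 0 := by simpa [hgs] using hs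
          refine Finset.mem_image.2 ⟨g s, ?_, by simp [hg'def, hgs]⟩
          refine Finset.mem_erase.2 ⟨by intro he; apply hgsm; rw [he]; ring, ?_⟩
          exact Finset.mem_image_of_mem g ((hmemA s).2 hgs)
        have hmmem : m ∈ A.image g := by
          rw [hm, hs₀]; exact Finset.mem_image_of_mem g hs₀A
        calc ((univ.filter fun s => g' s ≠ 0).image g').card
            ≤ (((A.image g).erase m).image (fun x => x - m)).card :=
              Finset.card_le_card hsub
          _ ≤ ((A.image g).erase m).card := Finset.card_image_le
          _ = (A.image g).card - 1 := Finset.card_erase_of_mem hmmem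
          _ ≤ N := by
              have := hcard
              have hpos : 0 < (A.image g).card := Finset.card_pos.2 ⟨m, hmmem⟩
              omega
      have hsupp' : 2 * (univ.filter fun s => g' s ≠ 0).card ≤ Fintype.card V := by
        have := Finset.card_le_card hsubsupp
        omega
      have IH := ih g' hcard' hg'nonneg hsupp'
      -- sum decomposition
      have hsumdec : ∑ s, g s = (∑ s, g' s) + m * A.card := by
        have hpt : ∀ s, g s = g' s + (if g s ≠ 0 then m else 0) := by
          intro s
          simp only [hg'def]
          by_cases hs : g s = 0 <;> simp [hs]
        calc ∑ s, g s = ∑ s, (g' s + (if g s ≠ 0 then m else 0)) := by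
              exact Finset.sum_congr rfl (fun s _ => hpt s)
          _ = (∑ s, g' s) + ∑ s, (if g s ≠ 0 then m else 0) := Finset.sum_add_distrib
          _ = (∑ s, g' s) + ∑ s ∈ A, m := by rw [Finset.sum_filter]
          _ = (∑ s, g' s) + m * A.card := by rw [Finset.sum_const, nsmul_eq_mul]; ring
      -- edge decomposition
      set e : V → V → ℝ := fun s t => if G.Adj s t then (1 : ℝ) else 0 with he
      set c : V → V → ℝ := fun s t => if (g s = 0 ↔ g t = 0) then 0 else m with hc
      have hpt2 : ∀ s t, (if G.Adj s t then |g s - g t| else 0) =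
          (if G.Adj s t then |g' s - g' t| else 0) + e s t * c s t := by
        intro s t
        by_cases hadj : G.Adj s t
        · simp only [hadj, if_true, he, hc]
          by_cases hs : g s = 0 <;> by_cases ht : g t = 0
          · simp [hg'def, hs, ht]
          · have : m ≤ g t := hmle t ((hmemA t).2 ht)
            rw [abs_sub_comm, abs_sub_comm (g' s)]
            simp only [hg'def, hs, ht, if_true, if_false]
            rw [abs_of_nonneg (by linarith [hg t] : (0:ℝ) ≤ g t - 0),
                abs_of_nonneg (by linarith : (0:ℝ) ≤ g t - m - 0)]
            simp [hs, ht]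
          · have : m ≤ g s := hmle s ((hmemA s).2 hs)
            simp only [hg'def, hs, ht, if_true, if_false]
            rw [abs_of_nonneg (by linarith [hg s] : (0:ℝ) ≤ g s - 0),
                abs_of_nonneg (by linarith : (0:ℝ) ≤ g s - m - 0)]
            simp [hs, ht]
          · simp only [hg'def, hs, ht, if_true]
            simp [hs, ht]
        · simp [hadj, he]
      have hesymm : ∀ s t, e s t = e t s := by
        intro s t
        simp only [he]
        by_cases hadj : G.Adj s t
        · simp [hadj, hadj.symm]
        · have : ¬ G.Adj t s := fun hc' => hadj hc'.symm
          simp [hadj, this]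
      -- the boundary sum
      set E : ℝ := ∑ s ∈ A, ∑ t ∈ Aᶜ, e s t with hE
      have hEineq : h * A.card ≤ E := hexp A hsupp
      have hcA : ∀ s ∈ A, ∀ t ∈ A, c s t = 0 := by
        intro s hs t ht
        simp only [hc, if_pos]
        simp [(hmemA s).1 hs, (hmemA t).1 ht]
      have hcAc : ∀ s ∈ Aᶜ, ∀ t ∈ Aᶜ, c s t = 0 := by
        intro s hs t ht
        rw [Finset.mem_compl, hmemA, not_not] at hs ht
        simp [hc, hs, ht]
      have hcm1 : ∀ s ∈ A, ∀ t ∈ Aᶜ, c s t = m := by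
        intro s hs t ht
        rw [Finset.mem_compl, hmemA, not_not] at ht
        have hs' := (hmemA s).1 hs
        simp [hc, hs', ht]
      have hcm2 : ∀ s ∈ Aᶜ, ∀ t ∈ A, c s t = m := by
        intro s hs t ht
        rw [Finset.mem_compl, hmemA, not_not] at hs
        have ht' := (hmemA t).1 ht
        simp [hc, hs, ht']
      have hbd : ∑ s, ∑ t, e s t * c s t = 2 * m * E := by
        have hsplit : ∀ F : V → V → ℝ, ∑ s, ∑ t, F s t =
            ((∑ s ∈ A, ∑ t ∈ A, F s t) + (∑ s ∈ A, ∑ t ∈ Aᶜ, F s t)) +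
            ((∑ s ∈ Aᶜ, ∑ t ∈ A, F s t) + (∑ s ∈ Aᶜ, ∑ t ∈ Aᶜ, F s t)) := by
          intro F
          rw [← Finset.sum_add_sum_compl A (fun s => ∑ t, F s t)]
          have hrow : ∀ s, ∑ t, F s t = ∑ t ∈ A, F s t + ∑ t ∈ Aᶜ, F s t :=
            fun s => (Finset.sum_add_sum_compl A (F s)).symm
          simp only [hrow, Finset.sum_add_distrib]
        rw [hsplit]
        have h1 : ∑ s ∈ A, ∑ t ∈ A, e s t * c s t = 0 :=
          Finset.sum_eq_zero fun s hs => Finset.sum_eq_zero fun t ht => by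
            rw [hcA s hs t ht, mul_zero]
        have h4 : ∑ s ∈ Aᶜ, ∑ t ∈ Aᶜ, e s t * c s t = 0 :=
          Finset.sum_eq_zero fun s hs => Finset.sum_eq_zero fun t ht => by
            rw [hcAc s hs t ht, mul_zero]
        have h2 : ∑ s ∈ A, ∑ t ∈ Aᶜ, e s t * c s t = m * E := by
          rw [hE, Finset.mul_sum]
          refine Finset.sum_congr rfl fun s hs => ?_
          rw [Finset.mul_sum]
          refine Finset.sum_congr rfl fun t ht => ?_
          rw [hcm1 s hs t ht]; ring
        have h3 : ∑ s ∈ Aᶜ, ∑ t ∈ A, e s t * c s t = m * E := by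
          rw [Finset.sum_comm]
          rw [hE, Finset.mul_sum]
          refine Finset.sum_congr rfl fun t ht => ?_
          rw [Finset.mul_sum]
          refine Finset.sum_congr rfl fun s hs => ?_
          rw [hcm2 s hs t ht, hesymm]; ring
        rw [h1, h2, h3, h4]; ring
      have hedgedec : ∑ s, ∑ t, (if G.Adj s t then |g s - g t| else 0) =
          (∑ s, ∑ t, (if G.Adj s t then |g' s - g' t| else 0)) + 2 * m * E := by
        rw [← hbd, ← Finset.sum_add_distrib]
        refine Finset.sum_congr rfl fun s _ => ?_
        rw [← Finset.sum_add_distrib]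
        exact Finset.sum_congr rfl fun t _ => hpt2 s t
      rw [hsumdec, hedgedec]
      have hmE : h * (m * A.card) ≤ m * E := by
        have := mul_le_mul_of_nonneg_left hEineq (le_of_lt hmpos)
        nlinarith
      nlinarith [IH]

/-- Co-area inequality for expanders: if `G` is a connected `k`-regular graph with
expanding constant at least `h` and `g : G → [0,∞)` is supported on at most half of the
vertices, then `h ∑_s g(s) ≤ ∑_{edges {s,t}} |g(s) − g(t)|` (the sum over unoriented
edges being written as half the sum over ordered adjacent pairs). -/
theorem coarea_expander {V : Type} [Fintype V] [DecidableEq V]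
    (G : SimpleGraph V) [DecidableRel G.Adj] (k : ℕ) (h : ℝ) (hh : 0 < h)
    (hconn : G.Connected) (hreg : G.IsRegularOfDegree k)
    (hexp : ∀ A : Finset V, 2 * A.card ≤ Fintype.card V →
      h * A.card ≤ ∑ s ∈ A, ∑ t ∈ Aᶜ, (if G.Adj s t then (1 : ℝ) else 0))
    (g : V → ℝ) (hg : ∀ s, 0 ≤ g s)
    (hsupp : 2 * (univ.filter fun s => g s ≠ 0).card ≤ Fintype.card V) :
    h * ∑ s, g s ≤ (1 / 2) * ∑ s, ∑ t, (if G.Adj s t then |g s - g t| else 0) := by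
  exact coarea_aux G h hh hexp ((univ.filter fun s => g s ≠ 0).image g).card g
    le_rfl hg hsupp
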